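/- Suppose Z Zᵀ is invertible, U_⊥ U_⊥ᵀ is invertible where U_⊥ = U M_Z, and Y = A⋆ Z + B⋆ U + R + E. Then the estimator B̂ = Y M_Z U_⊥ᵀ (U_⊥ U_⊥ᵀ)⁻¹ satisfies the operator-norm bound ‖B̂ − B⋆‖ ≤ ‖(R + E) M_Z‖ / sqrt(λ_min(U_⊥ U_⊥ᵀ)), where λ_min denotes the smallest eigenvalue of the positive definite matrix U_⊥ U_⊥ᵀ. -/

import Mathlib

open Matrix
open scoped Matrix.Norms.L2Operator
open scoped RealInnerProductSpace

lemma rayleigh_lower {k : ℕ} {S : Matrix (Fin k) (Fin k) ℝ} (hS : S.IsHermitian)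
    (y : Fin k → ℝ) : (⨅ i, hS.eigenvalues i) * (y ⬝ᵥ y) ≤ y ⬝ᵥ (S *ᵥ y) := by
  set c := ⨅ i, hS.eigenvalues i with hc
  set V : Matrix (Fin k) (Fin k) ℝ := (hS.eigenvectorUnitary : Matrix (Fin k) (Fin k) ℝ) with hV
  have hVu : V * star V = 1 := Unitary.mul_star_self_of_mem (hS.eigenvectorUnitary).2
  have hdiag : (Matrix.diagonal (fun i => hS.eigenvalues i - c)).PosSemidef :=
    posSemidef_diagonal_iff.mpr fun i => sub_nonneg.2 (ciInf_le (Set.finite_range _).bddBelow i)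
  have hdec : S - c • 1 = V * (Matrix.diagonal (fun i => hS.eigenvalues i - c)) * Vᴴ := by
    have hspec := hS.spectral_theorem
    rw [Unitary.conjStarAlgAut_apply, Matrix.star_eq_conjTranspose] at hspec
    have h1 : Matrix.diagonal (fun i => hS.eigenvalues i - c)
        = Matrix.diagonal (RCLike.ofReal ∘ hS.eigenvalues) - c • (1 : Matrix (Fin k) (Fin k) ℝ) := by
      ext i j
      by_cases h : i = j <;>
        simp [Matrix.diagonal_apply, Matrix.one_apply, h]
    rw [h1, mul_sub, sub_mul, ← hspec]
    congr 1
    rw [Matrix.mul_smul, Matrix.smul_mul, Matrix.mul_one, ← Matrix.star_eq_conjTranspose, hVu]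
  have hpsd : (S - c • 1).PosSemidef := by
    rw [hdec]; exact hdiag.mul_mul_conjTranspose_same V
  have h0 := hpsd.dotProduct_mulVec_nonneg y
  have hstar : star y = y := by simp
  rw [hstar, Matrix.sub_mulVec, Matrix.smul_mulVec, Matrix.one_mulVec,
    dotProduct_sub, dotProduct_smul] at h0
  have hsm : c • (y ⬝ᵥ y) = c * (y ⬝ᵥ y) := rfl
  rw [hsm] at h0
  linarith [h0]

lemma l2_opNorm_le_of_bound {k l : ℕ} (A : Matrix (Fin l) (Fin k) ℝ) {c : ℝ} (hc : 0 ≤ c)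
    (h : ∀ x : EuclideanSpace ℝ (Fin k),
      ‖(EuclideanSpace.equiv (Fin l) ℝ).symm (A *ᵥ x)‖ ≤ c * ‖x‖) : ‖A‖ ≤ c := by
  rw [Matrix.l2_opNorm_def]
  exact ContinuousLinearMap.opNorm_le_bound _ hc h

lemma euclid_norm_sq_eq_dot {k : ℕ} (y : Fin k → ℝ) :
    ‖(EuclideanSpace.equiv (Fin k) ℝ).symm y‖ ^ 2 = y ⬝ᵥ y := by
  rw [← real_inner_self_eq_norm_sq]
  rw [PiLp.inner_apply]
  simp [dotProduct, sq]

lemma inv_opNorm_le {k : ℕ} {S : Matrix (Fin k) (Fin k) ℝ} (hS : S.IsHermitian)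
    (hdet : IsUnit S.det) {c : ℝ} (hc : 0 < c) (hcle : c ≤ ⨅ i, hS.eigenvalues i) :
    ‖S⁻¹‖ ≤ 1 / c := by
  apply l2_opNorm_le_of_bound _ (by positivity)
  intro x
  set xf : Fin k → ℝ := WithLp.equiv 2 _ x with hxf
  set y : Fin k → ℝ := S⁻¹ *ᵥ xf with hy
  set ye : EuclideanSpace ℝ (Fin k) := (EuclideanSpace.equiv (Fin k) ℝ).symm y with hye
  show ‖ye‖ ≤ 1 / c * ‖x‖
  have h1 : S *ᵥ y = xf := by
    rw [hy, Matrix.mulVec_mulVec, Matrix.mul_nonsing_inv _ hdet, Matrix.one_mulVec]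
  have hdsq : 0 ≤ y ⬝ᵥ y := Finset.sum_nonneg fun i _ => mul_self_nonneg _
  have hray : c * (y ⬝ᵥ y) ≤ y ⬝ᵥ xf := by
    have := rayleigh_lower hS y
    rw [h1] at this
    nlinarith [this, mul_le_mul_of_nonneg_right hcle hdsq]
  have hcs : y ⬝ᵥ xf ≤ ‖ye‖ * ‖x‖ := by
    have h2 : y ⬝ᵥ xf = ⟪ye, x⟫ := by
      simp [PiLp.inner_apply, dotProduct, hye, hxf, mul_comm]
    rw [h2]
    exact real_inner_le_norm ye x
  have hnsq : ‖ye‖ ^ 2 = y ⬝ᵥ y := euclid_norm_sq_eq_dot y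
  have hct : c * ‖ye‖ ≤ ‖x‖ := by
    rcases eq_or_lt_of_le (norm_nonneg ye) with h0 | h0
    · rw [← h0, mul_zero]; exact norm_nonneg x
    · nlinarith [hray, hcs, hnsq]
  calc ‖ye‖ = (c * ‖ye‖) / c := by field_simp
    _ ≤ ‖x‖ / c := by gcongr
    _ = 1 / c * ‖x‖ := by ring

/-- Smallest eigenvalue of a symmetric real matrix (junk value `0` otherwise). -/
noncomputable def lambdaMin {n : Type*} [Fintype n] [DecidableEq n]
    (M : Matrix n n ℝ) : ℝ :=
  if h : M.IsHermitian then ⨅ i, h.eigenvalues i else 0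

/-- spectral-norm error bound for the residualized B-estimator:
`‖B̂ - B⋆‖ ≤ ‖(R + E) M_Z‖ / sqrt(λ_min(U_⊥ U_⊥ᵀ))`. -/
theorem b_hat_operator_norm_bound
    (d m q N : ℕ) (hN : 1 ≤ N)
    (Z : Matrix (Fin d) (Fin N) ℝ) (U : Matrix (Fin m) (Fin N) ℝ)
    (Y : Matrix (Fin q) (Fin N) ℝ)
    (Astar : Matrix (Fin q) (Fin d) ℝ) (Bstar : Matrix (Fin q) (Fin m) ℝ)
    (R E : Matrix (Fin q) (Fin N) ℝ)
    (hZ : IsUnit (Z * Zᵀ).det)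
    (P_Z : Matrix (Fin N) (Fin N) ℝ) (hP : P_Z = Zᵀ * (Z * Zᵀ)⁻¹ * Z)
    (M_Z : Matrix (Fin N) (Fin N) ℝ) (hM : M_Z = 1 - P_Z)
    (Uperp : Matrix (Fin m) (Fin N) ℝ) (hUp : Uperp = U * M_Z)
    (hUpinv : IsUnit (Uperp * Uperpᵀ).det)
    (hY : Y = Astar * Z + Bstar * U + R + E)
    (Bhat : Matrix (Fin q) (Fin m) ℝ)
    (hB : Bhat = Y * M_Z * Uperpᵀ * (Uperp * Uperpᵀ)⁻¹) :
    ‖Bhat - Bstar‖ ≤ ‖(R + E) * M_Z‖ / Real.sqrt (lambdaMin (Uperp * Uperpᵀ)) := by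
  set S : Matrix (Fin m) (Fin m) ℝ := Uperp * Uperpᵀ with hS
  -- algebra: Bhat - Bstar = (R+E) * M_Z * (Uperpᵀ * S⁻¹)
  have hZM : Z * M_Z = 0 := by
    rw [hM, hP, Matrix.mul_sub, Matrix.mul_one, ← Matrix.mul_assoc, ← Matrix.mul_assoc,
      Matrix.mul_nonsing_inv _ hZ, Matrix.one_mul, sub_self]
  have e1 : Y * M_Z = Bstar * Uperp + (R + E) * M_Z := by
    rw [hY, hUp]
    rw [Matrix.add_mul, Matrix.add_mul, Matrix.add_mul, Matrix.mul_assoc, hZM, Matrix.mul_zero, zero_add, Matrix.mul_assoc, Matrix.add_mul]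
    abel
  have e2 : Bhat - Bstar = (R + E) * M_Z * (Uperpᵀ * S⁻¹) := by
    rw [hB, e1, Matrix.add_mul, Matrix.add_mul, Matrix.mul_assoc (Bstar * Uperp),
      Matrix.mul_assoc Bstar, ← Matrix.mul_assoc Uperp, ← hS, Matrix.mul_nonsing_inv _ hUpinv, Matrix.mul_one]
    rw [Matrix.mul_assoc ((R + E) * M_Z)]
    abel
  set c : ℝ := lambdaMin S with hcdef
  have hSH : S.IsHermitian := by
    have h := Matrix.isHermitian_mul_conjTranspose_self Uperp
    rwa [Matrix.conjTranspose_eq_transpose_of_trivial] at h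
  have hSpsd : S.PosSemidef := by
    have h := Matrix.posSemidef_self_mul_conjTranspose Uperp
    rwa [Matrix.conjTranspose_eq_transpose_of_trivial] at h
  have hceq : c = ⨅ i, hSH.eigenvalues i := by
    rw [hcdef, lambdaMin, dif_pos hSH]
  by_cases hm : m = 0
  · subst hm
    have hz : Bhat - Bstar = 0 := by
      ext i j
      exact j.elim0
    rw [hz, norm_zero]
    positivity
  · haveI : Nonempty (Fin m) := ⟨⟨0, Nat.pos_of_ne_zero hm⟩⟩
    have hpos : ∀ i, 0 < hSH.eigenvalues i := by
      intro i
      rcases lt_or_eq_of_le (hSpsd.eigenvalues_nonneg i) with h | h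
      · exact h
      · exfalso
        have hdet0 : S.det = 0 := by
          have hd := hSH.det_eq_prod_eigenvalues
          rw [hd]
          apply Finset.prod_eq_zero (Finset.mem_univ i)
          simp [← h]
        exact hUpinv.ne_zero hdet0
    have hc : 0 < c := by
      obtain ⟨i0, hi0⟩ := Finite.exists_min hSH.eigenvalues
      rw [hceq]
      exact lt_of_lt_of_le (hpos i0) (le_ciInf hi0)
    set T : Matrix (Fin N) (Fin m) ℝ := Uperpᵀ * S⁻¹ with hT
    have hSsym : Sᵀ = S := by
      have := hSH
      rwa [Matrix.IsHermitian, Matrix.conjTranspose_eq_transpose_of_trivial] at this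
    have hSinv_sym : S⁻¹ᵀ = S⁻¹ := by
      rw [Matrix.transpose_nonsing_inv, hSsym]
    have hTT : Tᴴ * T = S⁻¹ := by
      rw [hT, Matrix.conjTranspose_eq_transpose_of_trivial, Matrix.transpose_mul,
        Matrix.transpose_transpose, hSinv_sym, Matrix.mul_assoc, ← Matrix.mul_assoc Uperp,
        ← hS, ← Matrix.mul_assoc, Matrix.nonsing_inv_mul _ hUpinv, Matrix.one_mul]
    have hTnorm : ‖T‖ ≤ Real.sqrt (1 / c) := by
      have h1 : ‖T‖ * ‖T‖ = ‖S⁻¹‖ := by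
        rw [← Matrix.l2_opNorm_conjTranspose_mul_self T, hTT]
      have h2 : ‖S⁻¹‖ ≤ 1 / c := inv_opNorm_le hSH hUpinv hc (le_of_eq hceq)
      rw [← Real.sqrt_sq (norm_nonneg T)]
      apply Real.sqrt_le_sqrt
      rw [sq, h1]
      exact h2
    rw [e2]
    calc ‖(R + E) * M_Z * T‖ ≤ ‖(R + E) * M_Z‖ * ‖T‖ := Matrix.l2_opNorm_mul _ _
      _ ≤ ‖(R + E) * M_Z‖ * Real.sqrt (1 / c) :=
          mul_le_mul_of_nonneg_left hTnorm (norm_nonneg _)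
      _ = ‖(R + E) * M_Z‖ / Real.sqrt c := by
          rw [one_div, Real.sqrt_inv, ← div_eq_mul_inv]
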